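/- Let K be a differential field of characteristic zero and t a primitive generator over K. Every logarithmic derivative f ∈ K(t) can be written as f = g + h, where g ∈ K(t) is a t-simple logarithmic derivative sum of the form Σᵢ mᵢ pᵢ′/pᵢ with mᵢ ∈ ℤ and pᵢ ∈ K[t] monic irreducible, and h ∈ K is a logarithmic derivative in K. -/

import Mathlib

open Polynomial UniqueFactorizationMonoid

section LogDeriv
variable {F : Type*} [Field F] {δ : F → F}

theorem ld_one (hδmul : ∀ a b : F, δ (a * b) = δ a * b + a * δ b) : δ 1 = 0 := by
  have h := hδmul 1 1
  simp at h
  exact h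

theorem ld_mul (hδmul : ∀ a b : F, δ (a * b) = δ a * b + a * δ b)
    {x y : F} (hx : x ≠ 0) (hy : y ≠ 0) :
    δ (x * y) / (x * y) = δ x / x + δ y / y := by
  rw [hδmul]; field_simp

theorem ld_div (hδmul : ∀ a b : F, δ (a * b) = δ a * b + a * δ b)
    {x y : F} (hx : x ≠ 0) (hy : y ≠ 0) :
    δ (x / y) / (x / y) = δ x / x - δ y / y := by
  have h1 : x / y ≠ 0 := div_ne_zero hx hy
  have h2 := ld_mul hδmul h1 hy
  rw [div_mul_cancel₀ x hy] at h2
  rw [h2]; ring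

theorem ld_prod (hδmul : ∀ a b : F, δ (a * b) = δ a * b + a * δ b)
    (m : Multiset F) (h : ∀ x ∈ m, x ≠ 0) :
    δ m.prod / m.prod = (m.map fun x => δ x / x).sum := by
  induction m using Multiset.induction with
  | empty => simp [ld_one hδmul]
  | cons a s ih =>
    have ha : a ≠ 0 := h a (Multiset.mem_cons_self a s)
    have hs : ∀ x ∈ s, x ≠ 0 := fun x hx => h x (Multiset.mem_cons_of_mem hx)
    have hsp : s.prod ≠ 0 := Multiset.prod_ne_zero fun h0 => hs 0 h0 rfl
    rw [Multiset.prod_cons, ld_mul hδmul ha hsp, ih hs, Multiset.map_cons, Multiset.sum_cons]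

end LogDeriv

namespace LDAux

noncomputable def Dmap {R : Type*} [CommRing R] (d : R → R) (r : Polynomial R) : Polynomial R :=
  r.sum fun n a => Polynomial.C (d a) * Polynomial.X ^ n

variable {R : Type*} [CommRing R] {d : R → R}

theorem Dmap_add (hd0 : d 0 = 0) (hdadd : ∀ a b, d (a + b) = d a + d b) (p q : R[X]) :
    Dmap d (p + q) = Dmap d p + Dmap d q := by
  unfold Dmap
  rw [Polynomial.sum_add_index]
  · intro n; simp [hd0]
  · intro n a b; rw [hdadd, map_add]; ring

theorem Dmap_monomial (hd0 : d 0 = 0) (n : ℕ) (a : R) :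
    Dmap d (Polynomial.monomial n a) = C (d a) * X ^ n :=
  Polynomial.sum_monomial_index a _ (by simp [hd0])

theorem degree_Dmap_le (r : R[X]) : (Dmap d r).degree ≤ r.degree := by
  unfold Dmap
  rw [Polynomial.sum_def]
  refine (Polynomial.degree_sum_le _ _).trans (Finset.sup_le fun n hn => ?_)
  calc (C (d (r.coeff n)) * X ^ n).degree ≤ (C (d (r.coeff n))).degree + (X ^ n : R[X]).degree :=
        Polynomial.degree_mul_le _ _
    _ ≤ 0 + (n : WithBot ℕ) := add_le_add Polynomial.degree_C_le (Polynomial.degree_X_pow_le n)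
    _ = (n : WithBot ℕ) := zero_add _
    _ ≤ r.degree := Polynomial.le_degree_of_mem_supp n hn

theorem degree_Dmap_lt [Nontrivial R] (hd0 : d 0 = 0) (hd1 : d 1 = 0)
    (hdadd : ∀ a b, d (a + b) = d a + d b) {r : R[X]} (hr : r.Monic) :
    (Dmap d r).degree < r.degree := by
  have h1 : Dmap d (Polynomial.X ^ r.natDegree) = 0 := by
    rw [Polynomial.X_pow_eq_monomial, Dmap_monomial hd0, hd1]; simp
  have h2 : Dmap d r = Dmap d (r - Polynomial.X ^ r.natDegree) := by
    have h3 := Dmap_add hd0 hdadd (r - X ^ r.natDegree) (X ^ r.natDegree)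
    rw [sub_add_cancel] at h3
    rw [h3, h1, add_zero]
  rw [h2]
  calc (Dmap d (r - X ^ r.natDegree)).degree ≤ (r - X ^ r.natDegree).degree := degree_Dmap_le _
    _ < r.degree := by
        refine Polynomial.degree_sub_lt ?_ hr.ne_zero ?_
        · rw [Polynomial.degree_X_pow, Polynomial.degree_eq_natDegree hr.ne_zero]
        · rw [hr.leadingCoeff, Polynomial.leadingCoeff_X_pow]

end LDAux

section FactorAux
open UniqueFactorizationMonoid

theorem squarefree_finset_prod {k : Type*} [Field k] (s : Finset (Polynomial k))
    (h : ∀ r ∈ s, r.Monic ∧ Irreducible r) : Squarefree (∏ r ∈ s, r) := by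
  classical
  have h0 : (∏ r ∈ s, r) ≠ 0 := Finset.prod_ne_zero_iff.mpr fun r hr => (h r hr).2.ne_zero
  rw [UniqueFactorizationMonoid.squarefree_iff_nodup_normalizedFactors h0]
  have h1 : (∏ r ∈ s, r) = s.val.prod := by
    rw [Finset.prod_eq_multiset_prod, Multiset.map_id']
  rw [h1, normalizedFactors_prod_eq _ fun r hr => (h r hr).2]
  have h2 : s.val.map normalize = s.val :=
    ((Multiset.map_congr rfl) fun r hr => (h r hr).1.normalize_eq_self).trans
      (Multiset.map_id _)
  rw [h2]
  exact s.nodup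

theorem exists_monic_factorization {k : Type*} [Field k] (w : Polynomial k) (hw : w ≠ 0) :
    ∃ M : Multiset (Polynomial k), (∀ r ∈ M, r.Monic ∧ Irreducible r) ∧
      w = Polynomial.C w.leadingCoeff * M.prod := by
  classical
  have hfac : ∀ r ∈ normalizedFactors w, r.Monic ∧ Irreducible r := by
    intro r hr
    have hirr := irreducible_of_normalized_factor r hr
    refine ⟨?_, hirr⟩
    rw [← normalize_normalized_factor r hr]
    exact Polynomial.monic_normalize hirr.ne_zero
  refine ⟨normalizedFactors w, hfac, ?_⟩
  have hm : ((normalizedFactors w).prod).Monic := by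
    have h4 := Polynomial.monic_multiset_prod_of_monic (normalizedFactors w) id
      fun r hr => (hfac r hr).1
    simpa using h4
  obtain ⟨v, hv⟩ := prod_normalizedFactors hw
  obtain ⟨c, hc, hcv⟩ := Polynomial.isUnit_iff.mp v.isUnit
  have hlc : w.leadingCoeff = c := by
    rw [← hv, ← hcv, Polynomial.leadingCoeff_mul, hm.leadingCoeff,
      Polynomial.leadingCoeff_C, one_mul]
  rw [hlc]
  calc w = (normalizedFactors w).prod * ↑v := hv.symm
    _ = Polynomial.C c * (normalizedFactors w).prod := by rw [← hcv]; exact mul_comm _ _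

end FactorAux

set_option maxHeartbeats 2000000 in
/-- Let `K` be a differential field of characteristic zero and `t` a primitive
generator over `K`, with `F = K(t)`.  Every logarithmic derivative `f ∈ K(t)`
can be written as `f = g + h`, where `g = Σᵢ mᵢ pᵢ(t)′/pᵢ(t)` is a `t`-simple
element with `mᵢ ∈ ℤ` and `pᵢ ∈ K[t]` monic irreducible, and `h ∈ K` is a
logarithmic derivative in `K`. -/
theorem logarithmic_derivative_decomposition (F : Type*) [Field F] [CharZero F]
    (δ : F → F)
    (hδadd : ∀ a b : F, δ (a + b) = δ a + δ b)
    (hδmul : ∀ a b : F, δ (a * b) = δ a * b + a * δ b)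
    (K : Subfield F) (hK : ∀ a ∈ K, δ a ∈ K)
    (t : F) (htr : Transcendental ↥K t) (ht : δ t ∈ K)
    (hgen : Subfield.closure ((K : Set F) ∪ {t}) = ⊤)
    (hnewconst : ∀ c : F, δ c = 0 → c ∈ K)
    (f : F) (hlog : ∃ u : F, u ≠ 0 ∧ f = δ u / u) :
    ∃ g h : F, f = g + h ∧
      (∃ (k : ℕ) (m : Fin k → ℤ) (p : Fin k → Polynomial ↥K),
        (∀ i, (p i).Monic ∧ Irreducible (p i)) ∧
        g = ∑ i, (m i : F) *
          (δ (Polynomial.aeval t (p i)) / Polynomial.aeval t (p i))) ∧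
      (∃ p q : Polynomial ↥K, q ≠ 0 ∧ p.degree < q.degree ∧ Squarefree q ∧
        g = Polynomial.aeval t p / Polynomial.aeval t q) ∧
      h ∈ K ∧ (∃ α : F, α ∈ K ∧ α ≠ 0 ∧ h = δ α / α) := by
  classical
  obtain ⟨u, hu0, hfu⟩ := hlog
  -- the induced derivation on K
  set δ' : ↥K → ↥K := fun a => ⟨δ ↑a, hK ↑a a.2⟩ with hδ'def
  have hδ0 : δ (0 : F) = 0 := by
    have h := hδadd 0 0; simp at h; exact h
  have hδcoe : ∀ a : ↥K, δ ↑a = ↑(δ' a) := fun a => rfl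
  have hδ'0 : δ' (0 : ↥K) = 0 := Subtype.ext (by show δ ((0 : ↥K) : F) = ((0 : ↥K) : F); simpa using hδ0)
  have hδ'1 : δ' (1 : ↥K) = 0 := Subtype.ext (by show δ ((1 : ↥K) : F) = ((0 : ↥K) : F); simpa using ld_one hδmul)
  have hδ'add : ∀ a b : ↥K, δ' (a + b) = δ' a + δ' b := fun a b =>
    Subtype.ext (by push_cast [hδ'def]; exact hδadd ↑a ↑b)
  have hcoe : ∀ a : ↥K, algebraMap ↥K F a = ↑a := fun _ => rfl
  have haev0 : ∀ r : Polynomial ↥K, r ≠ 0 → aeval t r ≠ 0 := fun r h0 h =>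
    h0 (transcendental_iff.mp htr r h)
  -- derivative of powers of t
  have hpow : ∀ n : ℕ, δ (t ^ n) = (n : F) * t ^ (n - 1) * δ t := by
    intro n
    induction n with
    | zero => simpa using ld_one hδmul
    | succ n ih =>
      rw [pow_succ, hδmul, ih]
      cases n with
      | zero => simp
      | succ m =>
        simp only [Nat.add_sub_cancel]
        push_cast
        ring
  -- the action of δ on K[t]
  have hDeval : ∀ r : Polynomial ↥K,
      δ (aeval t r) = aeval t (LDAux.Dmap δ' r) + δ t * aeval t (derivative r) := by
    intro r
    induction r using Polynomial.induction_on' with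
    | add p q hp hq =>
        rw [map_add, hδadd _ _, hp, hq, LDAux.Dmap_add hδ'0 hδ'add, derivative_add,
          map_add, map_add]
        ring
    | monomial n a =>
        have h1 : δ (algebraMap ↥K F a) = ↑(δ' a) := rfl
        rw [Polynomial.aeval_monomial, hδmul, h1, hpow, Polynomial.derivative_monomial,
          LDAux.Dmap_monomial hδ'0, map_mul, Polynomial.aeval_C, map_pow, Polynomial.aeval_X,
          Polynomial.aeval_monomial]
        simp only [hcoe]
        push_cast
        ring
  -- the full derivative operator on K[t]
  set τ : ↥K := ⟨δ t, ht⟩ with hτdef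
  set Dr : Polynomial ↥K → Polynomial ↥K := fun r => LDAux.Dmap δ' r + C τ * derivative r
    with hDrdef
  have hDrEval : ∀ r : Polynomial ↥K, δ (aeval t r) = aeval t (Dr r) := by
    intro r
    rw [hDeval r, hDrdef]
    simp only [map_add, map_mul, aeval_C, hcoe]
    rfl
  have hDrDeg : ∀ r : Polynomial ↥K, r.Monic → (Dr r).degree < r.degree := by
    intro r hr
    refine (Polynomial.degree_add_le _ _).trans_lt
      (max_lt (LDAux.degree_Dmap_lt hδ'0 hδ'1 hδ'add hr) ?_)
    refine (Polynomial.degree_mul_le _ _).trans_lt ?_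
    calc (C τ).degree + (derivative r).degree ≤ 0 + (derivative r).degree :=
          add_le_add Polynomial.degree_C_le le_rfl
      _ = (derivative r).degree := zero_add _
      _ < r.degree := Polynomial.degree_derivative_lt hr.ne_zero
  -- every element of F is a ratio of polynomials in t
  have hsurj : ∀ x : F, ∃ p q : Polynomial ↥K, q ≠ 0 ∧ x = aeval t p / aeval t q := by
    let S : Subfield F :=
      { carrier := {x | ∃ p q : Polynomial ↥K, q ≠ 0 ∧ x = aeval t p / aeval t q}
        mul_mem' := by
          rintro x y ⟨p1, q1, hq1, rfl⟩ ⟨p2, q2, hq2, rfl⟩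
          exact ⟨p1 * p2, q1 * q2, mul_ne_zero hq1 hq2, by
            rw [map_mul, map_mul]; exact div_mul_div_comm _ _ _ _⟩
        one_mem' := ⟨1, 1, one_ne_zero, by simp⟩
        add_mem' := by
          rintro x y ⟨p1, q1, hq1, rfl⟩ ⟨p2, q2, hq2, rfl⟩
          refine ⟨p1 * q2 + q1 * p2, q1 * q2, mul_ne_zero hq1 hq2, ?_⟩
          rw [map_add, map_mul, map_mul, map_mul,
            div_add_div _ _ (haev0 q1 hq1) (haev0 q2 hq2)]
        zero_mem' := ⟨0, 1, one_ne_zero, by simp⟩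
        neg_mem' := by
          rintro x ⟨p1, q1, hq1, rfl⟩
          exact ⟨-p1, q1, hq1, by rw [map_neg, neg_div]⟩
        inv_mem' := by
          rintro x ⟨p1, q1, hq1, rfl⟩
          by_cases hp1 : p1 = 0
          · exact ⟨0, 1, one_ne_zero, by simp [hp1]⟩
          · exact ⟨q1, p1, hp1, by rw [inv_div]⟩ }
    have hKS : (K : Set F) ∪ {t} ⊆ (S : Set F) := by
      rintro x (hx | rfl)
      · exact ⟨C ⟨x, hx⟩, 1, one_ne_zero, by rw [aeval_C, map_one, div_one]; rfl⟩
      · exact ⟨X, 1, one_ne_zero, by rw [aeval_X, map_one, div_one]⟩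
    intro x
    have h1 : Subfield.closure ((K : Set F) ∪ {t}) ≤ S := Subfield.closure_le.mpr hKS
    rw [hgen] at h1
    exact h1 (Subfield.mem_top x)
  obtain ⟨p, q, hq0, hupq⟩ := hsurj u
  have hq0' : aeval t q ≠ 0 := haev0 q hq0
  have hp0 : p ≠ 0 := by
    rintro rfl
    rw [map_zero, zero_div] at hupq
    exact hu0 hupq
  have hp0' : aeval t p ≠ 0 := haev0 p hp0
  -- key factorization of the logarithmic derivative of a polynomial
  have key : ∀ (w : Polynomial ↥K) (M : Multiset (Polynomial ↥K)),
      (∀ r ∈ M, r.Monic ∧ Irreducible r) → w ≠ 0 → w = C w.leadingCoeff * M.prod →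
      δ (aeval t w) / aeval t w = δ ↑w.leadingCoeff / (↑w.leadingCoeff : F) +
        (M.map fun r => δ (aeval t r) / aeval t r).sum := by
    intro w M hM hw hprod
    have hlc0 : w.leadingCoeff ≠ 0 := Polynomial.leadingCoeff_ne_zero.mpr hw
    have hlcF : (↑w.leadingCoeff : F) ≠ 0 := fun h => hlc0 (by exact_mod_cast h)
    have haw : aeval t w = ↑w.leadingCoeff * (M.map (aeval t)).prod := by
      conv_lhs => rw [hprod]
      rw [map_mul, aeval_C, hcoe, map_multiset_prod (aeval t) M]
    have hnz : ∀ x ∈ M.map (aeval t), x ≠ 0 := by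
      intro x hx
      obtain ⟨r, hr, rfl⟩ := Multiset.mem_map.mp hx
      exact haev0 r (hM r hr).2.ne_zero
    have hpne : (M.map (aeval t)).prod ≠ 0 := Multiset.prod_ne_zero fun h0 => hnz 0 h0 rfl
    rw [haw, ld_mul hδmul hlcF hpne, ld_prod hδmul _ hnz, Multiset.map_map]
    rfl
  obtain ⟨Mp, hMp_mi, hMpprod⟩ := exists_monic_factorization p hp0
  obtain ⟨Mq, hMq_mi, hMqprod⟩ := exists_monic_factorization q hq0
  -- the index set of irreducible factors
  set s : Finset (Polynomial ↥K) := Mp.toFinset ∪ Mq.toFinset with hsdef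
  have hs_mi : ∀ r ∈ s, r.Monic ∧ Irreducible r := by
    intro r hr
    rcases Finset.mem_union.mp hr with h | h
    · exact hMp_mi r (Multiset.mem_toFinset.mp h)
    · exact hMq_mi r (Multiset.mem_toFinset.mp h)
  -- sums over the index set
  have hsum : ∀ M : Multiset (Polynomial ↥K), M.toFinset ⊆ s →
      (M.map fun r => δ (aeval t r) / aeval t r).sum =
        ∑ r ∈ s, (M.count r : F) * (δ (aeval t r) / aeval t r) := by
    intro M hMs
    rw [Finset.sum_multiset_map_count]
    rw [Finset.sum_subset hMs]
    · exact Finset.sum_congr rfl fun r _ => by rw [nsmul_eq_mul]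
    · intro x _ hx
      rw [Multiset.count_eq_zero_of_notMem (fun h => hx (Multiset.mem_toFinset.mpr h))]
      simp
  have hf1 : f = δ (aeval t p) / aeval t p - δ (aeval t q) / aeval t q := by
    rw [hfu, hupq]
    exact ld_div hδmul hp0' hq0'
  -- the constant part
  have ha0 : p.leadingCoeff ≠ 0 := Polynomial.leadingCoeff_ne_zero.mpr hp0
  have hb0 : q.leadingCoeff ≠ 0 := Polynomial.leadingCoeff_ne_zero.mpr hq0
  set c : ↥K := p.leadingCoeff * q.leadingCoeff⁻¹ with hcdef
  have hc0 : c ≠ 0 := mul_ne_zero ha0 (inv_ne_zero hb0)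
  have hcF : (↑c : F) ≠ 0 := fun h => hc0 (by exact_mod_cast h)
  have haF : (↑p.leadingCoeff : F) ≠ 0 := fun h => ha0 (by exact_mod_cast h)
  have hbF : (↑q.leadingCoeff : F) ≠ 0 := fun h => hb0 (by exact_mod_cast h)
  have hcab : (↑c : F) = ↑p.leadingCoeff / ↑q.leadingCoeff := by
    rw [hcdef]
    push_cast
    rw [div_eq_mul_inv]
  have hLc : δ ↑c / (↑c : F) =
      δ ↑p.leadingCoeff / (↑p.leadingCoeff : F) - δ ↑q.leadingCoeff / (↑q.leadingCoeff : F) := by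
    rw [hcab]
    exact ld_div hδmul haF hbF
  -- main decomposition identity
  have hfg : f = δ ↑c / (↑c : F) +
      ∑ r ∈ s, (((Mp.count r : ℤ) - (Mq.count r : ℤ) : ℤ) : F) *
        (δ (aeval t r) / aeval t r) := by
    have hsimp : ∑ r ∈ s,
        (((Mp.count r : ℤ) - (Mq.count r : ℤ) : ℤ) : F) * (δ (aeval t r) / aeval t r) =
        (∑ r ∈ s, (Mp.count r : F) * (δ (aeval t r) / aeval t r)) -
          ∑ r ∈ s, (Mq.count r : F) * (δ (aeval t r) / aeval t r) := by
      rw [← Finset.sum_sub_distrib]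
      exact Finset.sum_congr rfl fun r _ => by push_cast; ring
    rw [hf1, key p Mp hMp_mi hp0 hMpprod, key q Mq hMq_mi hq0 hMqprod,
      hsum Mp Finset.subset_union_left, hsum Mq Finset.subset_union_right,
      hLc, hsimp]
    ring
  -- degree facts for the simple part
  have hQ0 : (∏ r ∈ s, r) ≠ 0 :=
    Finset.prod_ne_zero_iff.mpr fun r hr => (hs_mi r hr).2.ne_zero
  have hQaev : aeval t (∏ r ∈ s, r) ≠ 0 := haev0 _ hQ0
  have hQsf : Squarefree (∏ r ∈ s, r) := squarefree_finset_prod s hs_mi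
  have hterm : ∀ r ∈ s,
      ((C (((Mp.count r : ℤ) - (Mq.count r : ℤ) : ℤ) : ↥K) * (Dr r * ∏ r' ∈ s.erase r, r')).degree
        < (∏ r ∈ s, r).degree) := by
    intro r hr
    have h2 : (∏ r' ∈ s.erase r, r') ≠ 0 :=
      Finset.prod_ne_zero_iff.mpr fun r' hr' =>
        (hs_mi r' (Finset.mem_of_mem_erase hr')).2.ne_zero
    have h3 : (∏ r' ∈ s, r') = r * ∏ r' ∈ s.erase r, r' := (Finset.mul_prod_erase s _ hr).symm
    have h4 : (Dr r).degree < r.degree := hDrDeg r (hs_mi r hr).1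
    calc (C (((Mp.count r : ℤ) - (Mq.count r : ℤ) : ℤ) : ↥K) *
          (Dr r * ∏ r' ∈ s.erase r, r')).degree
        ≤ (C (((Mp.count r : ℤ) - (Mq.count r : ℤ) : ℤ) : ↥K)).degree +
            (Dr r * ∏ r' ∈ s.erase r, r').degree := Polynomial.degree_mul_le _ _
      _ ≤ 0 + (Dr r * ∏ r' ∈ s.erase r, r').degree :=
            add_le_add Polynomial.degree_C_le le_rfl
      _ = (Dr r * ∏ r' ∈ s.erase r, r').degree := zero_add _
      _ = (Dr r).degree + (∏ r' ∈ s.erase r, r').degree := Polynomial.degree_mul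
      _ < r.degree + (∏ r' ∈ s.erase r, r').degree :=
            WithBot.add_lt_add_right (fun hb => h2 (Polynomial.degree_eq_bot.mp hb)) h4
      _ = (∏ r' ∈ s, r').degree := by rw [h3, Polynomial.degree_mul]
  have hdegP :
      (∑ r ∈ s, C (((Mp.count r : ℤ) - (Mq.count r : ℤ) : ℤ) : ↥K) * (Dr r * ∏ r' ∈ s.erase r, r')).degree
        < (∏ r ∈ s, r).degree := by
    refine (Polynomial.degree_sum_le _ _).trans_lt ?_
    rw [Finset.sup_lt_iff (bot_lt_iff_ne_bot.mpr fun hb => hQ0 (Polynomial.degree_eq_bot.mp hb))]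
    exact hterm
  have hPQ : ∑ r ∈ s, (((Mp.count r : ℤ) - (Mq.count r : ℤ) : ℤ) : F) *
        (δ (aeval t r) / aeval t r)
      = aeval t (∑ r ∈ s,
            C (((Mp.count r : ℤ) - (Mq.count r : ℤ) : ℤ) : ↥K) * (Dr r * ∏ r' ∈ s.erase r, r'))
        / aeval t (∏ r ∈ s, r) := by
    rw [eq_div_iff hQaev, Finset.sum_mul, map_sum]
    refine Finset.sum_congr rfl fun r hr => ?_
    rw [map_mul, aeval_C, hcoe, map_mul, ← hDrEval r]
    have h3 : aeval t (∏ r' ∈ s, r') = aeval t r * aeval t (∏ r' ∈ s.erase r, r') := by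
      rw [← map_mul]
      exact congrArg (aeval t) (Finset.mul_prod_erase s (fun x => x) hr).symm
    have hr0 : aeval t r ≠ 0 := haev0 _ (hs_mi r hr).2.ne_zero
    rw [h3]
    push_cast
    field_simp
  refine ⟨∑ r ∈ s, (((Mp.count r : ℤ) - (Mq.count r : ℤ) : ℤ) : F) *
      (δ (aeval t r) / aeval t r),
    δ ↑c / (↑c : F), by rw [hfg]; ring, ?_, ?_, ?_, ⟨↑c, c.2, hcF, rfl⟩⟩
  · refine ⟨s.toList.length,
      fun i => (Mp.count (s.toList.get i) : ℤ) - (Mq.count (s.toList.get i) : ℤ),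
      fun i => s.toList.get i, fun i => hs_mi _ ?_, ?_⟩
    · rw [← Finset.mem_toList]; exact List.get_mem _ i
    · rw [← Finset.sum_map_toList, ← Fin.sum_univ_fun_getElem s.toList
        (fun r => (((Mp.count r : ℤ) - (Mq.count r : ℤ) : ℤ) : F) *
          (δ (aeval t r) / aeval t r))]
      rfl
  · exact ⟨∑ r ∈ s, C (((Mp.count r : ℤ) - (Mq.count r : ℤ) : ℤ) : ↥K) * (Dr r * ∏ r' ∈ s.erase r, r'),
      ∏ r ∈ s, r, hQ0, hdegP, hQsf, hPQ⟩
  · exact K.div_mem (hK ↑c c.2) c.2
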